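/- Let K be a field, A = K[x₁,…,xₙ], and φ, ψ K-algebra endomorphisms of A. If ker ψ ⊆ ker φ, then trdeg_K(image φ) ≤ trdeg_K(image ψ), where image denotes the range subalgebra and trdeg the transcendence degree over K. Moreover, if the inclusion ker ψ ⊊ ker φ is proper, then the inequality is strict: trdeg_K(image φ) < trdeg_K(image ψ). -/

import Mathlib

open MvPolynomial

/-- The transcendence degree of an algebra `A` over `K`: the supremum of cardinalities of
algebraically independent subsets (mirrors Mathlib's `Algebra.trdeg`). -/
noncomputable def algTrdeg (K A : Type*) [CommRing K] [CommRing A] [Algebra K A] : Cardinal :=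
  ⨆ ι : { s : Set A // AlgebraicIndependent K ((↑) : s → A) }, Cardinal.mk ι.1

section Helpers

variable {K : Type} [Field K]

lemma mk_le_algTrdeg {B : Type} [CommRing B] [Algebra K B] {s : Set B}
    (hs : AlgebraicIndependent K ((↑) : s → B)) : Cardinal.mk s ≤ algTrdeg K B :=
  le_ciSup (Cardinal.bddAbove_range _) (⟨s, hs⟩ : { s : Set B // AlgebraicIndependent K ((↑) : s → B) })

lemma algTrdeg_le_of_forall {B : Type} [CommRing B] [Algebra K B] {c : Cardinal}
    (h : ∀ s : Set B, AlgebraicIndependent K ((↑) : s → B) → Cardinal.mk s ≤ c) :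
    algTrdeg K B ≤ c := by
  rcases isEmpty_or_nonempty { s : Set B // AlgebraicIndependent K ((↑) : s → B) } with h'|h'
  · rw [algTrdeg, ciSup_of_empty]; exact bot_le
  · exact ciSup_le fun i => h i.1 i.2

lemma exists_lift {B C : Type} [CommRing B] [CommRing C] [Algebra K B] [Algebra K C]
    (f : B →ₐ[K] C) (hf : Function.Surjective f) {s : Set C}
    (hs : AlgebraicIndependent K ((↑) : s → C)) :
    ∃ t : Set B, AlgebraicIndependent K ((↑) : t → B) ∧ Cardinal.mk t = Cardinal.mk s := by
  choose g hg using hf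
  have hx : AlgebraicIndependent K (fun i : s => g i) := by
    apply AlgebraicIndependent.of_comp f
    have : (⇑f ∘ fun i : s => g ↑i) = ((↑) : s → C) := by
      funext i; simp [hg]
    rwa [this]
  exact ⟨Set.range (fun i : s => g ↑i), hx.coe_range,
    Cardinal.mk_range_eq _ hx.injective⟩

lemma algTrdeg_le_of_surjective {B C : Type} [CommRing B] [CommRing C] [Algebra K B] [Algebra K C]
    (f : B →ₐ[K] C) (hf : Function.Surjective f) : algTrdeg K C ≤ algTrdeg K B := by
  refine algTrdeg_le_of_forall fun s hs => ?_
  obtain ⟨t, ht, hc⟩ := exists_lift f hf hs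
  rw [← hc]; exact mk_le_algTrdeg ht

lemma algTrdeg_eq_of_equiv {B C : Type} [CommRing B] [CommRing C] [Algebra K B] [Algebra K C]
    (e : B ≃ₐ[K] C) : algTrdeg K B = algTrdeg K C :=
  le_antisymm (algTrdeg_le_of_surjective e.symm.toAlgHom e.symm.surjective)
    (algTrdeg_le_of_surjective e.toAlgHom e.surjective)

end Helpers

section AuxLemmas

variable {K : Type} [Field K]

lemma not_indep (n : ℕ) (y : Fin (n+1) → MvPolynomial (Fin n) K) :
    ¬ AlgebraicIndependent K y := by
  intro hy
  set D := Finset.univ.sup (fun i => (y i).totalDegree) with hD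
  set E := D * (n+1) + 1 with hE
  set M := E ^ n with hM
  set d := (n+1) * M with hd
  let e : (Fin (n+1) → Fin (M+1)) → (Fin (n+1) →₀ ℕ) :=
    fun t => Finsupp.equivFunOnFinite.symm (fun i => (t i : ℕ))
  have he : Function.Injective e := by
    intro a b hab
    have h2 : (fun i => ((a i : ℕ))) = (fun i => ((b i : ℕ))) :=
      Finsupp.equivFunOnFinite.symm.injective hab
    funext i
    exact Fin.val_injective (congrFun h2 i)
  let v : (Fin (n+1) → Fin (M+1)) → MvPolynomial (Fin n) K :=
    fun t => aeval y (monomial (e t) (1:K) : MvPolynomial (Fin (n+1)) K)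
  have hvli : LinearIndependent K v := by
    have h1 : LinearIndependent K
        (fun t : Fin (n+1) → Fin (M+1) => (monomial (e t) (1:K) : MvPolynomial (Fin (n+1)) K)) := by
      have := ((basisMonomials (Fin (n+1)) K).linearIndependent).comp e he
      simpa [coe_basisMonomials, Function.comp_def] using this
    have h2 := h1.map' (aeval y).toLinearMap (LinearMap.ker_eq_bot.mpr hy)
    have hv : v = ⇑(aeval y).toLinearMap ∘ fun t => (monomial (e t) (1:K) : MvPolynomial (Fin (n+1)) K) := by
      funext t
      simp only [v, Function.comp_apply, AlgHom.toLinearMap_apply]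
    rw [hv]
    exact h2
  let G : (Fin n → Fin (D*d+1)) → MvPolynomial (Fin n) K :=
    fun s => monomial (Finsupp.equivFunOnFinite.symm fun i => (s i : ℕ)) (1:K)
  have hspan : ∀ t, v t ∈ Submodule.span K (Set.range G) := by
    intro t
    have hdeg : (v t).totalDegree ≤ D * d := by
      have h1 : v t = (e t).prod fun i k => y i ^ k := by
        show (aeval y) (monomial (e t) (1:K) : MvPolynomial (Fin (n+1)) K) = _
        rw [aeval_monomial, map_one, one_mul]
      rw [h1, Finsupp.prod]
      calc ((e t).support.prod fun i => y i ^ (e t) i).totalDegree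
          ≤ (e t).support.sum fun i => (y i ^ (e t) i).totalDegree :=
            totalDegree_finset_prod _ _
        _ ≤ (e t).support.sum fun _ => M * D := by
            apply Finset.sum_le_sum
            intro i _
            calc (y i ^ (e t) i).totalDegree ≤ (e t) i * (y i).totalDegree :=
                  totalDegree_pow _ _
              _ ≤ M * D := by
                  apply Nat.mul_le_mul
                  · exact Nat.lt_succ_iff.mp (t i).isLt
                  · exact Finset.le_sup (f := fun i => (y i).totalDegree) (Finset.mem_univ i)
        _ ≤ (Finset.univ : Finset (Fin (n+1))).sum fun _ => M * D := by
            apply Finset.sum_le_sum_of_subset (Finset.subset_univ _)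
        _ = (n+1) * (M * D) := by simp [Finset.sum_const, mul_comm]
        _ = D * d := by rw [hd]; ring
    rw [← support_sum_monomial_coeff (v t)]
    apply Submodule.sum_mem
    intro s hs
    have h1 : ∀ i, s i ≤ D*d := by
      intro i
      calc s i ≤ s.support.sum fun j => s j := by
            by_cases hi : i ∈ s.support
            · exact Finset.single_le_sum (fun _ _ => Nat.zero_le _) hi
            · simp [Finsupp.notMem_support_iff.mp hi]
        _ = s.sum fun _ k => k := rfl
        _ ≤ (v t).totalDegree := le_totalDegree hs
        _ ≤ D * d := hdeg
    have h2 : monomial s (coeff s (v t)) = (coeff s (v t)) • (monomial s (1:K)) := by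
      rw [smul_monomial, smul_eq_mul, mul_one]
    rw [h2]
    refine Submodule.smul_mem _ _ (Submodule.subset_span ?_)
    refine ⟨fun i => ⟨s i, Nat.lt_succ_of_le (h1 i)⟩, ?_⟩
    show monomial (Finsupp.equivFunOnFinite.symm fun i => s i) (1:K) = monomial s 1
    rw [show (fun i => s i) = ⇑s from rfl, Finsupp.equivFunOnFinite_symm_coe]
  have c1 : Cardinal.mk (Fin (n+1) → Fin (M+1)) ≤ Module.rank K (Submodule.span K (Set.range G)) := by
    let v' : (Fin (n+1) → Fin (M+1)) → Submodule.span K (Set.range G) := fun t => ⟨v t, hspan t⟩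
    have hv' : LinearIndependent K v' := by
      apply LinearIndependent.of_comp (Submodule.span K (Set.range G)).subtype
      exact hvli
    exact hv'.cardinal_le_rank
  have c2 : Module.rank K (Submodule.span K (Set.range G)) ≤ Cardinal.mk (Set.range G) :=
    rank_span_le _
  have c3 : Cardinal.mk (Set.range G) ≤ (((D*d+1)^n : ℕ) : Cardinal) := by
    calc Cardinal.mk (Set.range G) ≤ Cardinal.mk (Fin n → Fin (D*d+1)) := Cardinal.mk_range_le
      _ = (((D*d+1)^n : ℕ) : Cardinal) := by simp [Cardinal.mk_fintype]
  have c0 : Cardinal.mk (Fin (n+1) → Fin (M+1)) = (((M+1)^(n+1) : ℕ) : Cardinal) := by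
    simp [Cardinal.mk_fintype]
  have hle : ((M+1)^(n+1) : ℕ) ≤ (D*d+1)^n := by
    have := (c1.trans (c2.trans c3))
    rw [c0] at this
    exact_mod_cast this
  have h1 : D*d+1 ≤ E*(M+1) := by
    rw [hd, hE]
    nlinarith [Nat.zero_le (D * (n+1)), Nat.zero_le M]
  have hnum : (D*d+1)^n < (M+1)^(n+1) := by
    calc (D*d+1)^n ≤ (E*(M+1))^n := Nat.pow_le_pow_left h1 n
      _ = E^n * (M+1)^n := by rw [mul_pow]
      _ = M * (M+1)^n := by rw [hM]
      _ < (M+1) * (M+1)^n := by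
          apply Nat.mul_lt_mul_of_lt_of_le (Nat.lt_succ_self M) le_rfl
          exact Nat.pow_pos (Nat.succ_pos M)
      _ = (M+1)^(n+1) := by rw [pow_succ]; ring
  omega

lemma option_indep {B C : Type} [CommRing B] [IsDomain B] [CommRing C] [Algebra K B] [Algebra K C]
    (θ : B →ₐ[K] C) {ι : Type} {x : ι → B}
    (hx : AlgebraicIndependent K (θ ∘ x)) {b : B} (hb : b ≠ 0) (hθb : θ b = 0) :
    AlgebraicIndependent K (fun o : Option ι => o.elim b x) := by
  rw [algebraicIndependent_iff]
  intro p hp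
  set w : Option ι → B := fun o : Option ι => o.elim b x with hw
  set f : MvPolynomial ι K →+* B := (aeval x : MvPolynomial ι K →ₐ[K] B).toRingHom with hf
  set eL := optionEquivLeft K ι with heL
  have key : ((aeval w).toRingHom : MvPolynomial (Option ι) K →+* B)
      = (Polynomial.eval₂RingHom f b).comp (eL : MvPolynomial (Option ι) K →+* Polynomial (MvPolynomial ι K)) := by
    apply MvPolynomial.ringHom_ext
    · intro r
      simp [heL, optionEquivLeft_C, hf]
    · intro o
      cases o with
      | none =>
        simp [heL, optionEquivLeft_X_none, hw]
      | some i =>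
        simp [heL, optionEquivLeft_X_some, hw, hf]
  -- coefficient-zero killer
  have hg : Function.Injective (aeval (θ ∘ x) : MvPolynomial ι K →ₐ[K] C) :=
    algebraicIndependent_iff_injective_aeval.mp hx
  have coeff0 : ∀ q : Polynomial (MvPolynomial ι K),
      Polynomial.eval₂ f b q = 0 → q.coeff 0 = 0 := by
    intro q h0
    have h1 : Polynomial.eval₂ (θ.toRingHom.comp f) (θ.toRingHom b) q = 0 :=
      (Polynomial.hom_eval₂ (f := f) (g := θ.toRingHom) (p := q) b).symm.trans (by rw [h0, map_zero])
    rw [show θ.toRingHom b = (0:C) from hθb, Polynomial.eval₂_at_zero] at h1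
    have h2 : (θ.toRingHom.comp f) (q.coeff 0) = aeval (θ ∘ x) (q.coeff 0) := by
      simp [hf, comp_aeval_apply, Function.comp_def]
    rw [h2] at h1
    have := hg (a₁ := q.coeff 0) (a₂ := 0) (by rw [h1, map_zero])
    exact this
  have main : ∀ N (q : Polynomial (MvPolynomial ι K)), q.natDegree ≤ N →
      Polynomial.eval₂ f b q = 0 → q = 0 := by
    intro N
    induction N with
    | zero =>
      intro q hq h0
      rw [Polynomial.eq_C_of_natDegree_eq_zero (Nat.le_zero.mp hq), coeff0 q h0, map_zero]
    | succ N ih =>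
      intro q hq h0
      have hc0 : q.coeff 0 = 0 := coeff0 q h0
      have hXdiv : Polynomial.X * q.divX = q := by
        have := Polynomial.X_mul_divX_add q
        rwa [hc0, map_zero, add_zero] at this
      have h1 : b * Polynomial.eval₂ f b q.divX = 0 := by
        have h1' : Polynomial.eval₂ f b (Polynomial.X * q.divX) = 0 := by rw [hXdiv]; exact h0
        rwa [Polynomial.eval₂_mul, Polynomial.eval₂_X] at h1'
      have h2 : Polynomial.eval₂ f b q.divX = 0 :=
        (mul_eq_zero.mp h1).resolve_left hb
      have h3 : q.divX = 0 := by
        apply ih _ _ h2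
        rw [Polynomial.natDegree_divX_eq_natDegree_tsub_one]
        omega
      rw [← hXdiv, h3, mul_zero]
  have hq0 : Polynomial.eval₂ f b (eL p) = 0 := by
    have := congrArg (fun r => r p) key
    simp only [RingHom.coe_comp, Function.comp_apply, AlgHom.toRingHom_eq_coe,
      RingHom.coe_coe, Polynomial.coe_eval₂RingHom] at this
    rw [← this]
    exact hp
  have : eL p = 0 := main _ _ le_rfl hq0
  exact eL.injective (this.trans (map_zero eL).symm)

lemma indep_card_le (n : ℕ) {s : Set (MvPolynomial (Fin n) K)}
    (hs : AlgebraicIndependent K ((↑) : s → MvPolynomial (Fin n) K)) :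
    Cardinal.mk s ≤ n := by
  by_contra hlt
  push_neg at hlt
  have h1 : ((n+1 : ℕ) : Cardinal) ≤ Cardinal.mk s := by
    calc ((n+1:ℕ) : Cardinal) = (n : Cardinal) + 1 := by push_cast; ring
      _ ≤ Order.succ (n : Cardinal) := Cardinal.add_one_le_succ _
      _ ≤ _ := Order.succ_le_of_lt hlt
  rw [← Cardinal.mk_fin (n+1), Cardinal.le_def] at h1
  obtain ⟨emb⟩ := h1
  exact not_indep n _ (hs.comp emb emb.injective)

lemma algTrdeg_lt_of {B C : Type} [CommRing B] [CommRing C] [Algebra K B] [Algebra K C]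
    [Nontrivial C] {n : ℕ}
    (hC : ∀ s : Set C, AlgebraicIndependent K ((↑) : s → C) → Cardinal.mk s ≤ n)
    (hstep : ∀ s : Set C, AlgebraicIndependent K ((↑) : s → C) →
      ∃ t : Set B, AlgebraicIndependent K ((↑) : t → B) ∧ Cardinal.mk t = Cardinal.mk s + 1) :
    algTrdeg K C < algTrdeg K B := by
  have ha : algTrdeg K C ≤ n := algTrdeg_le_of_forall hC
  obtain ⟨k, hk⟩ := Cardinal.lt_aleph0.mp (ha.trans_lt (Cardinal.nat_lt_aleph0 n))
  have hattained : ∃ s : Set C, AlgebraicIndependent K ((↑) : s → C) ∧ Cardinal.mk s = k := by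
    by_contra hno
    push_neg at hno
    cases k with
    | zero =>
      exact hno ∅ (algebraicIndependent_empty) (by simp)
    | succ k' =>
      have hb : ∀ s : Set C, AlgebraicIndependent K ((↑) : s → C) →
          Cardinal.mk s ≤ (k' : ℕ) := by
        intro s hs
        have h1 : Cardinal.mk s ≤ ((k'+1 : ℕ) : Cardinal) := (mk_le_algTrdeg hs).trans_eq hk
        obtain ⟨m, hm⟩ := Cardinal.lt_aleph0.mp (h1.trans_lt (Cardinal.nat_lt_aleph0 _))
        rw [hm] at h1 ⊢
        have hm2 : m ≠ k'+1 := by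
          intro hcon; exact hno s hs (by rw [hm, hcon])
        have : m ≤ k' + 1 := by exact_mod_cast h1
        exact_mod_cast Nat.lt_succ_iff.mp (lt_of_le_of_ne this hm2)
      have h2 := algTrdeg_le_of_forall hb
      rw [hk] at h2
      have : (k' + 1 : ℕ) ≤ k' := by exact_mod_cast h2
      omega
  obtain ⟨s, hs, hsk⟩ := hattained
  obtain ⟨t, ht, htc⟩ := hstep s hs
  have h2 : ((k+1 : ℕ) : Cardinal) ≤ algTrdeg K B := by
    have h3 := mk_le_algTrdeg ht
    rw [htc, hsk] at h3
    convert h3 using 1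
    push_cast; ring
  calc algTrdeg K C = (k : Cardinal) := hk
    _ < ((k+1:ℕ) : Cardinal) := by exact_mod_cast Nat.lt_succ_self k
    _ ≤ algTrdeg K B := h2

end AuxLemmas



/-- If `ker ψ ⊆ ker φ` then `trdeg (image φ) ≤ trdeg (image ψ)`, with strict inequality
when the inclusion of kernels is proper. -/
theorem stmt_2 (K : Type) [Field K] (n : ℕ)
    (φ ψ : MvPolynomial (Fin n) K →ₐ[K] MvPolynomial (Fin n) K)
    (h : RingHom.ker ψ ≤ RingHom.ker φ) :
    algTrdeg K ↥φ.range ≤ algTrdeg K ↥ψ.range ∧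
    (RingHom.ker ψ < RingHom.ker φ → algTrdeg K ↥φ.range < algTrdeg K ↥ψ.range) := by
  set A := MvPolynomial (Fin n) K
  set P : Ideal A := RingHom.ker ψ with hP
  set Q : Ideal A := RingHom.ker φ with hQ
  have eφ : (A ⧸ Q) ≃ₐ[K] ↥φ.range := Ideal.quotientKerEquivRange φ
  have eψ : (A ⧸ P) ≃ₐ[K] ↥ψ.range := Ideal.quotientKerEquivRange ψ
  have hrφ : algTrdeg K ↥φ.range = algTrdeg K (A ⧸ Q) := (algTrdeg_eq_of_equiv eφ).symm
  have hrψ : algTrdeg K ↥ψ.range = algTrdeg K (A ⧸ P) := (algTrdeg_eq_of_equiv eψ).symm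
  have hPle : ∀ a : A, a ∈ P → (Ideal.Quotient.mkₐ K Q) a = 0 := fun a ha =>
    Ideal.Quotient.eq_zero_iff_mem.mpr (h ha)
  set θ : (A ⧸ P) →ₐ[K] (A ⧸ Q) := Ideal.Quotient.liftₐ P (Ideal.Quotient.mkₐ K Q) hPle with hθ
  have hθmk : ∀ a : A, θ (Ideal.Quotient.mk P a) = Ideal.Quotient.mk Q a := by
    intro a
    rw [hθ]
    rw [show (Ideal.Quotient.mk P a) = Ideal.Quotient.mkₐ K P a from rfl]
    rw [Ideal.Quotient.liftₐ_apply]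
    exact Ideal.Quotient.lift_mk _ _ _
  have hθs : Function.Surjective θ := by
    intro c
    obtain ⟨a, rfl⟩ := Ideal.Quotient.mk_surjective c
    exact ⟨Ideal.Quotient.mk P a, hθmk a⟩
  constructor
  · rw [hrφ, hrψ]
    exact algTrdeg_le_of_surjective θ hθs
  · intro hlt
    rw [hrφ, hrψ]
    haveI hQp : Q.IsPrime := RingHom.ker_isPrime φ
    haveI hPp : P.IsPrime := RingHom.ker_isPrime ψ
    haveI : Nontrivial (A ⧸ Q) := Ideal.Quotient.nontrivial_iff.mpr hQp.ne_top
    apply algTrdeg_lt_of (n := n)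
    · intro s hs
      obtain ⟨t, ht, hc⟩ := exists_lift (Ideal.Quotient.mkₐ K Q)
        (Ideal.Quotient.mkₐ_surjective K Q) hs
      rw [← hc]
      exact indep_card_le n ht
    · intro s hs
      obtain ⟨f, hfQ, hfP⟩ := SetLike.exists_of_lt hlt
      set x : s → A ⧸ P := fun i => (hθs ↑i).choose with hx
      have hcomp : ⇑θ ∘ x = ((↑) : s → A ⧸ Q) := funext fun i => (hθs ↑i).choose_spec
      have hxind : AlgebraicIndependent K (⇑θ ∘ x) := by rw [hcomp]; exact hs
      set b : A ⧸ P := Ideal.Quotient.mk P f with hb'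
      have hb : b ≠ 0 := fun hcon => hfP (Ideal.Quotient.eq_zero_iff_mem.mp hcon)
      have hθb : θ b = 0 := by
        rw [hb', hθmk]
        exact Ideal.Quotient.eq_zero_iff_mem.mpr hfQ
      have hw := option_indep θ hxind hb hθb
      refine ⟨Set.range (fun o : Option s => o.elim b x), hw.coe_range, ?_⟩
      rw [Cardinal.mk_range_eq _ hw.injective, Cardinal.mk_option]
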